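/- Let k be odd and let G be a k-uniform hypergraph on {1,…,n} in which every vertex belongs to at least one edge (G has no singletons). Then zero is not an eigenvalue of the signless Laplacian tensor of G: there is no nonzero x ∈ ℂ^n with ((D+A) x^{k−1})_i = 0 for all i. -/

import Mathlib

open Finset

/-- Degree of vertex `i` in the hypergraph with edge set `E`. -/
def hdeg {n : ℕ} (E : Finset (Finset (Fin n))) (i : Fin n) : ℕ :=
  (E.filter fun e => i ∈ e).card

/-- Laplacian tensor action `((D - A) x^{k-1})_i` over ℂ. -/
noncomputable def lapC (k : ℕ) {n : ℕ} (E : Finset (Finset (Fin n)))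
    (x : Fin n → ℂ) (i : Fin n) : ℂ :=
  (hdeg E i : ℂ) * x i ^ (k - 1) -
    ∑ e ∈ E.filter (fun e => i ∈ e), ∏ j ∈ e.erase i, x j

/-- Signless Laplacian tensor action `((D + A) x^{k-1})_i` over ℂ. -/
noncomputable def slapC (k : ℕ) {n : ℕ} (E : Finset (Finset (Fin n)))
    (x : Fin n → ℂ) (i : Fin n) : ℂ :=
  (hdeg E i : ℂ) * x i ^ (k - 1) +
    ∑ e ∈ E.filter (fun e => i ∈ e), ∏ j ∈ e.erase i, x j

/-- Laplacian tensor action `((D - A) x^{k-1})_i` over ℝ. -/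
noncomputable def lapR (k : ℕ) {n : ℕ} (E : Finset (Finset (Fin n)))
    (x : Fin n → ℝ) (i : Fin n) : ℝ :=
  (hdeg E i : ℝ) * x i ^ (k - 1) -
    ∑ e ∈ E.filter (fun e => i ∈ e), ∏ j ∈ e.erase i, x j

/-- Signless Laplacian tensor action `((D + A) x^{k-1})_i` over ℝ. -/
noncomputable def slapR (k : ℕ) {n : ℕ} (E : Finset (Finset (Fin n)))
    (x : Fin n → ℝ) (i : Fin n) : ℝ :=
  (hdeg E i : ℝ) * x i ^ (k - 1) +
    ∑ e ∈ E.filter (fun e => i ∈ e), ∏ j ∈ e.erase i, x j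

/-- The hypergraph with edge set `E` is connected: every pair of distinct vertices is
joined by a chain of edges with consecutive edges intersecting. -/
def HConnected {n : ℕ} (E : Finset (Finset (Fin n))) : Prop :=
  ∀ i j : Fin n, i ≠ j → ∃ m : ℕ, ∃ es : Fin (m + 1) → Finset (Fin n),
    (∀ r, es r ∈ E) ∧ i ∈ es 0 ∧ j ∈ es (Fin.last m) ∧
    ∀ r : Fin m, (es r.castSucc ∩ es r.succ).Nonempty

noncomputable def Complex.abs : AbsoluteValue ℂ ℝ where
  toFun z := ‖z‖
  map_mul' := norm_mul
  nonneg' := norm_nonneg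
  eq_zero' _ := norm_eq_zero
  add_le' := norm_add_le

lemma Complex.abs_conj (z : ℂ) : Complex.abs ((starRingEnd ℂ) z) = Complex.abs z :=
  Complex.norm_conj z

lemma Complex.abs_re_le_abs (z : ℂ) : |z.re| ≤ Complex.abs z :=
  Complex.abs_re_le_norm z

lemma Complex.sq_abs (z : ℂ) : Complex.abs z ^ 2 = Complex.normSq z :=
  Complex.sq_norm z

-- key lemma: at a max-modulus vertex, each edge product equals -x_v^{k-1}
lemma keyA {n k : ℕ} (hk : 3 ≤ k) (E : Finset (Finset (Fin n)))
    (hE : ∀ e ∈ E, e.card = k) (x : Fin n → ℂ) (M : ℝ)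
    (hM : ∀ j, Complex.abs (x j) ≤ M) (v : Fin n)
    (hv : Complex.abs (x v) = M) (hMpos : 0 < M)
    (heq : slapC k E x v = 0) :
    ∀ e ∈ E, v ∈ e → ∏ j ∈ e.erase v, x j = -(x v) ^ (k - 1) := by
  set c : ℂ := x v ^ (k - 1) with hc
  have hcabs : Complex.abs c = M ^ (k - 1) := by
    rw [hc, map_pow, hv]
  have hcpos : 0 < Complex.abs c := by rw [hcabs]; positivity
  set S := E.filter (fun e => v ∈ e) with hS
  -- each term has modulus ≤ |c|
  have htle : ∀ e ∈ S, Complex.abs (∏ j ∈ e.erase v, x j) ≤ Complex.abs c := by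
    intro e he
    rw [mem_filter] at he
    have hcard : (e.erase v).card = k - 1 := by
      rw [card_erase_of_mem he.2, hE e he.1]
    rw [map_prod, hcabs, ← hcard]
    calc ∏ j ∈ e.erase v, Complex.abs (x j) ≤ ∏ _j ∈ e.erase v, M :=
          Finset.prod_le_prod (fun j _ => AbsoluteValue.nonneg _ _) (fun j _ => hM j)
      _ = M ^ (e.erase v).card := by rw [prod_const]
  -- the sum equation
  have hsum : ∑ e ∈ S, ∏ j ∈ e.erase v, x j = -((hdeg E v : ℂ) * c) := by
    have := heq
    rw [slapC] at this
    linear_combination this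
  -- real parts
  have hre : ∀ e ∈ S, -(Complex.abs c ^ 2) ≤
      ((starRingEnd ℂ) c * ∏ j ∈ e.erase v, x j).re := by
    intro e he
    have h1 : |((starRingEnd ℂ) c * ∏ j ∈ e.erase v, x j).re| ≤ Complex.abs c ^ 2 := by
      calc |((starRingEnd ℂ) c * ∏ j ∈ e.erase v, x j).re|
          ≤ Complex.abs ((starRingEnd ℂ) c * ∏ j ∈ e.erase v, x j) :=
            Complex.abs_re_le_abs _
        _ = Complex.abs c * Complex.abs (∏ j ∈ e.erase v, x j) := by
            rw [map_mul, Complex.abs_conj]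
        _ ≤ Complex.abs c * Complex.abs c :=
            mul_le_mul_of_nonneg_left (htle e he) (AbsoluteValue.nonneg _ _)
        _ = Complex.abs c ^ 2 := (sq _).symm
    linarith [(abs_le.mp h1).1]
  have hsumre : ∑ e ∈ S, ((starRingEnd ℂ) c * ∏ j ∈ e.erase v, x j).re
      = ∑ e ∈ S, -(Complex.abs c ^ 2) := by
    have h1 : (∑ e ∈ S, (starRingEnd ℂ) c * ∏ j ∈ e.erase v, x j)
        = -((hdeg E v : ℂ) * ((starRingEnd ℂ) c * c)) := by
      rw [← Finset.mul_sum, hsum]; ring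
    have h2 : (starRingEnd ℂ) c * c = (Complex.abs c ^ 2 : ℝ) := by
      rw [← Complex.normSq_eq_conj_mul_self, ← Complex.sq_abs]
    have h3 := congrArg Complex.re h1
    rw [Complex.re_sum] at h3
    rw [h3, h2]
    have hcardS : S.card = hdeg E v := rfl
    simp [Complex.mul_re, Complex.ofReal_re, ← hcardS, mul_comm, ← Complex.ofReal_pow]
  -- equality termwise
  have hterm : ∀ e ∈ S, ((starRingEnd ℂ) c * ∏ j ∈ e.erase v, x j).re
      = -(Complex.abs c ^ 2) := by
    intro e he
    have := (Finset.sum_eq_sum_iff_of_le hre).mp hsumre.symm e he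
    linarith [this]
  intro e heE hve
  have heS : e ∈ S := by rw [hS, mem_filter]; exact ⟨heE, hve⟩
  set z := (starRingEnd ℂ) c * ∏ j ∈ e.erase v, x j with hz
  have hzre : z.re = -(Complex.abs c ^ 2) := hterm e heS
  have hzabs : Complex.abs z ≤ Complex.abs c ^ 2 := by
    rw [hz, map_mul, Complex.abs_conj]
    calc Complex.abs c * Complex.abs (∏ j ∈ e.erase v, x j)
        ≤ Complex.abs c * Complex.abs c :=
          mul_le_mul_of_nonneg_left (htle e heS) (AbsoluteValue.nonneg _ _)
      _ = Complex.abs c ^ 2 := (sq _).symm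
  have him : z.im = 0 := by
    have h1 : z.re ^ 2 + z.im ^ 2 = Complex.abs z ^ 2 := by
      rw [Complex.sq_abs, Complex.normSq_apply]; ring
    have h2 : Complex.abs z ^ 2 ≤ (Complex.abs c ^ 2) ^ 2 := by
      have := hzabs; nlinarith [AbsoluteValue.nonneg Complex.abs z]
    nlinarith [sq_nonneg z.im]
  have hzeq : z = -((Complex.abs c : ℂ) ^ 2) := by
    apply Complex.ext
    · simp [hzre, ← Complex.ofReal_pow]
    · simp [him, ← Complex.ofReal_pow]
  -- conclude t = -c
  have hconj : (starRingEnd ℂ) c * c = ((Complex.abs c : ℂ)) ^ 2 := by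
    rw [← Complex.normSq_eq_conj_mul_self, ← Complex.sq_abs]; norm_cast
  have hkey : (starRingEnd ℂ) c * ((∏ j ∈ e.erase v, x j) + c) = 0 := by
    rw [mul_add, ← hz, hzeq, hconj]; ring
  have hcne : (starRingEnd ℂ) c ≠ 0 := by
    simp only [ne_eq, map_eq_zero]
    intro h; rw [h] at hcpos; simp at hcpos
  have := (mul_eq_zero.mp hkey).resolve_left hcne
  rw [hc] at this ⊢
  linear_combination this

lemma maxeq {n : ℕ} (x : Fin n → ℂ) (M : ℝ)
    (hM : ∀ j, Complex.abs (x j) ≤ M) (hMpos : 0 < M) (s : Finset (Fin n))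
    (habs : Complex.abs (∏ j ∈ s, x j) = M ^ s.card) :
    ∀ j ∈ s, Complex.abs (x j) = M := by
  intro j hj
  by_contra hne
  have hlt : Complex.abs (x j) < M := lt_of_le_of_ne (hM j) hne
  have hprod : ∏ l ∈ s, Complex.abs (x l)
      = Complex.abs (x j) * ∏ l ∈ s.erase j, Complex.abs (x l) :=
    (Finset.mul_prod_erase s _ hj).symm
  have herle : ∏ l ∈ s.erase j, Complex.abs (x l) ≤ M ^ (s.erase j).card := by
    rw [← Finset.prod_const]
    exact Finset.prod_le_prod (fun l _ => AbsoluteValue.nonneg _ _) (fun l _ => hM l)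
  have hstrict : ∏ l ∈ s, Complex.abs (x l) < M ^ s.card := by
    rw [hprod, ← Finset.card_erase_add_one hj, pow_succ, mul_comm (M ^ _) M]
    have h1 : Complex.abs (x j) * ∏ l ∈ s.erase j, Complex.abs (x l)
        ≤ Complex.abs (x j) * M ^ (s.erase j).card :=
      mul_le_mul_of_nonneg_left herle (AbsoluteValue.nonneg _ _)
    have h2 : Complex.abs (x j) * M ^ (s.erase j).card < M * M ^ (s.erase j).card := by
      have : (0:ℝ) < M ^ (s.erase j).card := by positivity
      exact mul_lt_mul_of_pos_right hlt this
    linarith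
  rw [← map_prod] at hstrict
  rw [habs] at hstrict
  exact lt_irrefl _ hstrict

theorem stmt_14 {n k : ℕ} (hk : 3 ≤ k) (hn : k ≤ n) (hkodd : Odd k)
    (E : Finset (Finset (Fin n))) (hE : ∀ e ∈ E, e.card = k)
    (hnosing : ∀ i : Fin n, ∃ e ∈ E, i ∈ e) :
    ¬ ∃ x : Fin n → ℂ, x ≠ 0 ∧ ∀ i, slapC k E x i = 0 := by
  rintro ⟨x, hx0, hxe⟩
  have hn0 : 0 < n := by omega
  obtain ⟨v, -, hvmax⟩ := Finset.exists_max_image Finset.univ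
    (fun i => Complex.abs (x i)) ⟨⟨0, hn0⟩, Finset.mem_univ _⟩
  set M := Complex.abs (x v) with hMdef
  have hM : ∀ j, Complex.abs (x j) ≤ M := fun j => hvmax j (Finset.mem_univ _)
  have hMpos : 0 < M := by
    obtain ⟨i, hi⟩ := Function.ne_iff.mp hx0
    have : 0 < Complex.abs (x i) := by
      simpa using (AbsoluteValue.pos Complex.abs (by simpa using hi))
    exact lt_of_lt_of_le this (hM i)
  obtain ⟨e, heE, hve⟩ := hnosing v
  have hA := keyA hk E hE x M hM v rfl hMpos (hxe v)
  have he1 := hA e heE hve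
  -- every vertex of e has modulus M
  have hallM : ∀ j ∈ e, Complex.abs (x j) = M := by
    have hcard : (e.erase v).card = k - 1 := by
      rw [Finset.card_erase_of_mem hve, hE e heE]
    have habs : Complex.abs (∏ j ∈ e.erase v, x j) = M ^ (e.erase v).card := by
      rw [he1, Complex.abs.map_neg, map_pow, hcard, ← hMdef]
    have hme := maxeq x M hM hMpos (e.erase v) habs
    intro j hj
    by_cases hjv : j = v
    · rw [hjv]
    · exact hme j (Finset.mem_erase.mpr ⟨hjv, hj⟩)
  -- each j in e gives prod over e = -(x j)^k
  have hk1 : k - 1 + 1 = k := by omega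
  have hP : ∀ j ∈ e, ∏ l ∈ e, x l = -(x j) ^ k := by
    intro j hj
    have hAj := keyA hk E hE x M hM j (hallM j hj) hMpos (hxe j) e heE hj
    have hm := Finset.mul_prod_erase e x hj
    rw [hAj] at hm
    have hxp : x j ^ k = x j * x j ^ (k - 1) := by conv_lhs => rw [← hk1, pow_succ']
    rw [← hm, hxp]
    ring
  set P := ∏ l ∈ e, x l with hPdef
  have hPk : P ^ k = -(P ^ k) := by
    have h1 : P ^ k = ∏ j ∈ e, x j ^ k := by rw [hPdef, Finset.prod_pow]
    have h2 : ∏ j ∈ e, x j ^ k = ∏ _j ∈ e, (-P) :=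
      Finset.prod_congr rfl (fun j hj => by linear_combination hP j hj)
    have h3 : ∏ _j ∈ e, (-P) = -(P ^ k) := by
      rw [Finset.prod_const, hE e heE, Odd.neg_pow hkodd]
    calc P ^ k = ∏ j ∈ e, x j ^ k := h1
      _ = ∏ _j ∈ e, (-P) := h2
      _ = -(P ^ k) := h3
  have hPne : P ≠ 0 := by
    rw [hPdef]
    apply Finset.prod_ne_zero_iff.mpr
    intro l hl h0
    have h1 := hallM l hl
    rw [h0, Complex.abs.map_zero] at h1
    linarith
  have hP0 : P ^ k = 0 := by linear_combination (1/2 : ℂ) * hPk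
  exact pow_ne_zero k hPne hP0
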